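/- Energy-based variational lower bound on conditional mutual information: let (X, Y, B) be finite random variables with strictly positive joint distribution, and let h : X × Y × B → ℝ be any function. Then I(X; Y | B) ≥ E_{p(x,y,b)}[h(x,y,b)] − e^{−1}·E_{p(x)}E_{p(y,b)}[e^{h(x,y,b)}] − I(X; B), where the second expectation is over independent x ∼ p(x) and (y,b) ∼ p(y,b). -/

import Mathlib

open Finset

/-- Conditional mutual information `I(A;C|D)` of a finite joint pmf `p`. -/
noncomputable def cmi {A C D : Type} [Fintype A] [Fintype C] [Fintype D]
    (p : A → C → D → ℝ) : ℝ :=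
  ∑ a, ∑ c, ∑ d, p a c d *
    Real.log ((∑ a', ∑ c', p a' c' d) * p a c d /
      ((∑ c', p a c' d) * (∑ a', p a' c d)))

/-- Mutual information `I(X;B)` extracted from the joint pmf `p` over `(X,Y,B)`. -/
noncomputable def miXB {X Y B : Type} [Fintype X] [Fintype Y] [Fintype B]
    (p : X → Y → B → ℝ) : ℝ :=
  ∑ x, ∑ b, (∑ y, p x y b) *
    Real.log ((∑ y, p x y b) / ((∑ y, ∑ b', p x y b') * (∑ x', ∑ y, p x' y b)))

lemma sub_le_mul_log_div {a b : ℝ} (ha : 0 < a) (hb : 0 < b) :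
    a - b ≤ a * Real.log (a / b) := by
  have h1 : Real.log (b / a) ≤ b / a - 1 := Real.log_le_sub_one_of_pos (by positivity)
  have h2 : Real.log (a / b) = Real.log a - Real.log b := Real.log_div ha.ne' hb.ne'
  have h3 : Real.log (b / a) = Real.log b - Real.log a := Real.log_div hb.ne' ha.ne'
  have h4 : a * (b / a) = b := by field_simp
  nlinarith [mul_le_mul_of_nonneg_left h1 ha.le]

lemma log_le_inv_e_mul {z : ℝ} (hz : 0 < z) : Real.log z ≤ (Real.exp 1)⁻¹ * z := by
  have he : (0:ℝ) < Real.exp 1 := Real.exp_pos 1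
  have h1 := Real.add_one_le_exp ((Real.exp 1)⁻¹ * z - 1)
  rw [Real.exp_sub] at h1
  have h3 : z ≤ Real.exp ((Real.exp 1)⁻¹ * z) := by
    have h2 : (Real.exp 1)⁻¹ * z ≤ Real.exp ((Real.exp 1)⁻¹ * z) / Real.exp 1 := by linarith
    have h4 := (le_div_iff₀ he).mp h2
    have hz' : (Real.exp 1)⁻¹ * z * Real.exp 1 = z := by field_simp
    linarith
  calc Real.log z ≤ Real.log (Real.exp ((Real.exp 1)⁻¹ * z)) :=
        Real.log_le_log hz h3
    _ = _ := Real.log_exp _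

theorem energy_based_variational_lower_bound {X Y B : Type}
    [Fintype X] [Fintype Y] [Fintype B]
    (p : X → Y → B → ℝ) (hp : ∀ x y b, 0 < p x y b)
    (hp1 : ∑ x, ∑ y, ∑ b, p x y b = 1)
    (h : X → Y → B → ℝ) :
    (∑ x, ∑ y, ∑ b, p x y b * h x y b) -
      (Real.exp 1)⁻¹ *
        (∑ x, (∑ y, ∑ b, p x y b) *
          (∑ y, ∑ b, (∑ x', p x' y b) * Real.exp (h x y b))) -
      miXB p ≤ cmi p := by
  -- nonemptiness
  have hX : Nonempty X := by
    by_contra hc; rw [not_nonempty_iff] at hc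
    simp [Finset.univ_eq_empty] at hp1
  have hY : Nonempty Y := by
    by_contra hc; rw [not_nonempty_iff] at hc
    simp [Finset.univ_eq_empty] at hp1
  have hB : Nonempty B := by
    by_contra hc; rw [not_nonempty_iff] at hc
    simp [Finset.univ_eq_empty] at hp1
  -- positivity of marginals
  have hpx : ∀ x, 0 < ∑ y, ∑ b, p x y b := fun x =>
    Finset.sum_pos (fun y _ => Finset.sum_pos (fun b _ => hp x y b) univ_nonempty) univ_nonempty
  have hpyb : ∀ y b, 0 < ∑ x', p x' y b := fun y b =>
    Finset.sum_pos (fun x _ => hp x y b) univ_nonempty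
  have hpxb : ∀ x b, 0 < ∑ y', p x y' b := fun x b =>
    Finset.sum_pos (fun y _ => hp x y b) univ_nonempty
  have hpb : ∀ b, 0 < ∑ x', ∑ y', p x' y' b := fun b =>
    Finset.sum_pos (fun x _ => hpxb x b) univ_nonempty
  have hZ : ∀ x, 0 < ∑ y, ∑ b, (∑ x', p x' y b) * Real.exp (h x y b) := fun x =>
    Finset.sum_pos (fun y _ => Finset.sum_pos
      (fun b _ => mul_pos (hpyb y b) (Real.exp_pos _)) univ_nonempty) univ_nonempty
  -- Step 1: cmi + miXB = I(X; Y,B)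
  have hmi : miXB p = ∑ x, ∑ y, ∑ b, p x y b *
      Real.log ((∑ y', p x y' b) / ((∑ y', ∑ b', p x y' b') * (∑ x', ∑ y', p x' y' b))) := by
    unfold miXB
    refine Finset.sum_congr rfl fun x _ => ?_
    trans ∑ b, ∑ y, p x y b *
      Real.log ((∑ y', p x y' b) / ((∑ y', ∑ b', p x y' b') * (∑ x', ∑ y', p x' y' b)))
    · exact Finset.sum_congr rfl fun b _ => Finset.sum_mul _ _ _
    · exact Finset.sum_comm
  have hEq : cmi p + miXB p = ∑ x, ∑ y, ∑ b, p x y b *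
      Real.log (p x y b / ((∑ y', ∑ b', p x y' b') * (∑ x', p x' y b))) := by
    rw [hmi]
    unfold cmi
    rw [← Finset.sum_add_distrib]
    refine Finset.sum_congr rfl fun x _ => ?_
    rw [← Finset.sum_add_distrib]
    refine Finset.sum_congr rfl fun y _ => ?_
    rw [← Finset.sum_add_distrib]
    refine Finset.sum_congr rfl fun b _ => ?_
    rw [← mul_add]
    congr 1
    rw [← Real.log_mul
      (div_pos (mul_pos (hpb b) (hp x y b)) (mul_pos (hpxb x b) (hpyb y b))).ne'
      (div_pos (hpxb x b) (mul_pos (hpx x) (hpb b))).ne']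
    congr 1
    have h1 := (hpb b).ne'
    have h2 := (hpxb x b).ne'
    have h3 := (hpyb y b).ne'
    have h4 := (hpx x).ne'
    field_simp
  -- Step 2: per-x Donsker–Varadhan bound
  have step2 : ∀ x, -((∑ y, ∑ b, p x y b) *
      ((Real.exp 1)⁻¹ * (∑ y, ∑ b, (∑ x', p x' y b) * Real.exp (h x y b)))) ≤
      ∑ y, ∑ b, (p x y b *
        Real.log (p x y b / ((∑ y', ∑ b', p x y' b') * (∑ x', p x' y b)))
        - p x y b * h x y b) := by
    intro x
    set Zx : ℝ := ∑ y, ∑ b, (∑ x', p x' y b) * Real.exp (h x y b) with hZdef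
    have hZpos : 0 < Zx := hZ x
    set Px : ℝ := ∑ y, ∑ b, p x y b with hPdef
    have hPpos : 0 < Px := hpx x
    -- Gibbs inequality term by term
    have h1 : ∑ y, ∑ b, (p x y b -
        Px * ((∑ x', p x' y b) * Real.exp (h x y b) / Zx)) ≤
        ∑ y, ∑ b, p x y b * Real.log (p x y b /
          (Px * ((∑ x', p x' y b) * Real.exp (h x y b) / Zx))) := by
      refine Finset.sum_le_sum fun y _ => Finset.sum_le_sum fun b _ => ?_
      exact sub_le_mul_log_div (hp x y b)
        (mul_pos hPpos (div_pos (mul_pos (hpyb y b) (Real.exp_pos _)) hZpos))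
    -- the left side of h1 equals 0
    have h2 : ∑ y, ∑ b, (p x y b -
        Px * ((∑ x', p x' y b) * Real.exp (h x y b) / Zx)) = 0 := by
      simp only [Finset.sum_sub_distrib]
      have hA : ∑ y, ∑ b, Px * ((∑ x', p x' y b) * Real.exp (h x y b) / Zx) = Px := by
        calc ∑ y, ∑ b, Px * ((∑ x', p x' y b) * Real.exp (h x y b) / Zx)
            = Px * ∑ y, ∑ b, ((∑ x', p x' y b) * Real.exp (h x y b) / Zx) := by
              rw [Finset.mul_sum]
              exact Finset.sum_congr rfl fun y _ => (Finset.mul_sum _ _ _).symm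
          _ = Px * ((∑ y, ∑ b, (∑ x', p x' y b) * Real.exp (h x y b)) / Zx) := by
              congr 1
              rw [Finset.sum_div]
              exact Finset.sum_congr rfl fun y _ => (Finset.sum_div _ _ _).symm
          _ = Px * (Zx / Zx) := by rw [← hZdef]
          _ = Px := by rw [div_self hZpos.ne', mul_one]
      rw [hA, ← hPdef, sub_self]
    -- the right side of h1 termwise
    have h3 : ∀ y, ∀ b, p x y b * Real.log (p x y b /
          (Px * ((∑ x', p x' y b) * Real.exp (h x y b) / Zx))) =
        (p x y b * Real.log (p x y b / ((∑ y', ∑ b', p x y' b') * (∑ x', p x' y b)))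
          - p x y b * h x y b) + p x y b * Real.log Zx := by
      intro y b
      have harg : p x y b / (Px * ((∑ x', p x' y b) * Real.exp (h x y b) / Zx)) =
          (p x y b / (Px * (∑ x', p x' y b))) * (Zx / Real.exp (h x y b)) := by
        have hS := (hpyb y b).ne'
        have hE := (Real.exp_pos (h x y b)).ne'
        field_simp
      rw [harg, Real.log_mul
        (div_pos (hp x y b) (mul_pos hPpos (hpyb y b))).ne'
        (div_pos hZpos (Real.exp_pos _)).ne',
        Real.log_div hZpos.ne' (Real.exp_pos _).ne', Real.log_exp, hPdef]
      ring
    have h4 : ∑ y, ∑ b, p x y b * Real.log (p x y b /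
          (Px * ((∑ x', p x' y b) * Real.exp (h x y b) / Zx))) =
        (∑ y, ∑ b, (p x y b *
          Real.log (p x y b / ((∑ y', ∑ b', p x y' b') * (∑ x', p x' y b)))
          - p x y b * h x y b)) + Px * Real.log Zx := by
      have : ∀ y, ∀ b, p x y b * Real.log Zx = p x y b * Real.log Zx := fun _ _ => rfl
      calc ∑ y, ∑ b, p x y b * Real.log (p x y b /
            (Px * ((∑ x', p x' y b) * Real.exp (h x y b) / Zx)))
          = ∑ y, ∑ b, ((p x y b *
            Real.log (p x y b / ((∑ y', ∑ b', p x y' b') * (∑ x', p x' y b)))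
            - p x y b * h x y b) + p x y b * Real.log Zx) := by
            exact Finset.sum_congr rfl fun y _ => Finset.sum_congr rfl fun b _ => h3 y b
        _ = _ := by
            simp only [Finset.sum_add_distrib]
            congr 1
            rw [hPdef, Finset.sum_mul]
            exact Finset.sum_congr rfl fun y _ => (Finset.sum_mul _ _ _).symm
    rw [h2, h4] at h1
    have h5 : Real.log Zx ≤ (Real.exp 1)⁻¹ * Zx := log_le_inv_e_mul hZpos
    nlinarith [mul_le_mul_of_nonneg_left h5 hPpos.le]
  -- Step 3: assemble
  have step3 : ∑ x, -((∑ y, ∑ b, p x y b) *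
      ((Real.exp 1)⁻¹ * (∑ y, ∑ b, (∑ x', p x' y b) * Real.exp (h x y b)))) ≤
      ∑ x, ∑ y, ∑ b, (p x y b *
        Real.log (p x y b / ((∑ y', ∑ b', p x y' b') * (∑ x', p x' y b)))
        - p x y b * h x y b) :=
    Finset.sum_le_sum fun x _ => step2 x
  have hL : ∑ x, -((∑ y, ∑ b, p x y b) *
      ((Real.exp 1)⁻¹ * (∑ y, ∑ b, (∑ x', p x' y b) * Real.exp (h x y b)))) =
      -((Real.exp 1)⁻¹ * ∑ x, (∑ y, ∑ b, p x y b) *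
        (∑ y, ∑ b, (∑ x', p x' y b) * Real.exp (h x y b))) := by
    rw [Finset.mul_sum, ← Finset.sum_neg_distrib]
    exact Finset.sum_congr rfl fun x _ => by ring
  have hR : ∑ x, ∑ y, ∑ b, (p x y b *
      Real.log (p x y b / ((∑ y', ∑ b', p x y' b') * (∑ x', p x' y b)))
      - p x y b * h x y b) =
      (∑ x, ∑ y, ∑ b, p x y b *
        Real.log (p x y b / ((∑ y', ∑ b', p x y' b') * (∑ x', p x' y b)))) -
      (∑ x, ∑ y, ∑ b, p x y b * h x y b) := by
    simp only [Finset.sum_sub_distrib]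
  rw [hL, hR] at step3
  linarith [hEq, step3]
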